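/- Fix s > 0, c ∈ (0,1), ω ≥ 0, ζ ≥ 0, η ≥ 0, ν ∈ (0,1], and α > 0 with α ≠ ν, and set a = s(1−c) + ω². For λ > 0 define X(λ) = sqrt((aα − aν + λν)² + 4aλν²), q̂(λ) = (X(λ) + aα − (a + λ)ν)/(2aλ), S(λ) = q̂(λ)/(ν + a·q̂(λ)), γ(λ) = a²νS(λ)²/α, I¹ = (s(1−c)(1−ν) + ω²)/ν, and E¹(λ) = (I¹ + γ(λ)ζ² + η²)/(1 − γ(λ)). Then as λ → 0⁺, E¹(λ) converges to: (ν/(ν−α))·(s(1−c)(1−ν) + ω²)/ν + (αζ² + νη²)/(ν − α) if α < ν, and (α/(α−ν))·(s(1−c)(1−ν) + ω²)/ν + (νζ² + αη²)/(α − ν) if α > ν. -/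

import Mathlib

/-- Conjugate order parameter of the replica saddle-point equations. -/
noncomputable def qhatFun (a α ν lam : ℝ) : ℝ :=
  (Real.sqrt ((a * α - a * ν + lam * ν) ^ 2 + 4 * a * lam * ν ^ 2)
      + a * α - (a + lam) * ν) / (2 * a * lam)

/-- Reduced resolvent factor `S(λ) = q̂(λ)/(ν + a·q̂(λ))`. -/
noncomputable def Sfun (a α ν lam : ℝ) : ℝ :=
  qhatFun a α ν lam / (ν + a * qhatFun a α ν lam)

/-- Overlap parameter `γ(λ) = a²νS(λ)²/α`. -/
noncomputable def gammaFun (a α ν lam : ℝ) : ℝ :=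
  a ^ 2 * ν * Sfun a α ν lam ^ 2 / α


open Filter Set Real

/-- Continuous closed form of `Sfun` on `lam > 0`. -/
lemma Sfun_eq (a α ν lam : ℝ) (ha : 0 < a) (hν : 0 < ν) (hα : 0 < α) (hl : 0 < lam) :
    Sfun a α ν lam =
      2 * α / (Real.sqrt ((a * α - a * ν + lam * ν) ^ 2 + 4 * a * lam * ν ^ 2)
        + a * α + a * ν + lam * ν) := by
  set R := Real.sqrt ((a * α - a * ν + lam * ν) ^ 2 + 4 * a * lam * ν ^ 2) with hR
  have hR2 : R ^ 2 = (a * α - a * ν + lam * ν) ^ 2 + 4 * a * lam * ν ^ 2 :=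
    Real.sq_sqrt (by positivity)
  have hRD : a * α - a * ν + lam * ν < R := by
    have h1 : |a * α - a * ν + lam * ν| ^ 2 < R ^ 2 := by
      rw [sq_abs, hR2]
      have : 0 < 4 * a * lam * ν ^ 2 := by positivity
      linarith
    have := lt_of_pow_lt_pow_left₀ 2 (Real.sqrt_nonneg _) h1
    calc a * α - a * ν + lam * ν ≤ |a * α - a * ν + lam * ν| := le_abs_self _
      _ < R := this
  have hT : 0 < R - a * α + a * ν + lam * ν := by linarith [hν.le, mul_pos hl hν]
  have hq : qhatFun a α ν lam = 2 * α * ν / (R - a * α + a * ν + lam * ν) := by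
    rw [qhatFun, ← hR, div_eq_div_iff (by positivity) (by linarith)]
    nlinarith [hR2]
  rw [Sfun, hq]
  have hden : ν + a * (2 * α * ν / (R - a * α + a * ν + lam * ν)) ≠ 0 := by
    rw [ne_eq]
    have : 0 < ν + a * (2 * α * ν / (R - a * α + a * ν + lam * ν)) := by positivity
    linarith
  have hden2 : 0 < R + a * α + a * ν + lam * ν := by
    have : 0 ≤ R := Real.sqrt_nonneg _
    nlinarith
  have key : ν + a * (2 * α * ν / (R - a * α + a * ν + lam * ν))
      = ν * (R + a * α + a * ν + lam * ν) / (R - a * α + a * ν + lam * ν) := by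
    rw [eq_div_iff hT.ne', add_mul, mul_assoc a, div_mul_cancel₀ _ hT.ne']
    ring
  rw [key, div_div_div_cancel_right₀ hT.ne', div_eq_div_iff (by positivity) hden2.ne']
  ring

lemma main_limit (a α ν I ζ η : ℝ) (ha : 0 < a) (hν : 0 < ν) (hα : 0 < α) (hαν : α ≠ ν) :
    Filter.Tendsto
      (fun lam : ℝ => (I + gammaFun a α ν lam * ζ ^ 2 + η ^ 2) / (1 - gammaFun a α ν lam))
      (nhdsWithin 0 (Set.Ioi 0))
      (nhds (if α < ν then (ν / (ν - α)) * I + (α * ζ ^ 2 + ν * η ^ 2) / (ν - α)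
        else (α / (α - ν)) * I + (ν * ζ ^ 2 + α * η ^ 2) / (α - ν))) := by
  set F : ℝ → ℝ := fun lam =>
    Real.sqrt ((a * α - a * ν + lam * ν) ^ 2 + 4 * a * lam * ν ^ 2)
      + a * α + a * ν + lam * ν with hF
  have hFcont : Continuous F := by
    apply Continuous.add
    apply Continuous.add
    apply Continuous.add
    · exact Real.continuous_sqrt.comp (by continuity)
    · exact continuous_const
    · exact continuous_const
    · continuity
  have hF0 : F 0 = |a * α - a * ν| + a * α + a * ν := by
    simp [hF, Real.sqrt_sq_eq_abs]
  have hF0pos : 0 < F 0 := by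
    rw [hF0]
    have h1 := abs_nonneg (a * α - a * ν)
    nlinarith [mul_pos ha hα, mul_pos ha hν]
  set γc : ℝ → ℝ := fun lam => a ^ 2 * ν * (2 * α / F lam) ^ 2 / α with hγc
  have hγcont : ContinuousAt γc 0 := by
    apply ContinuousAt.div_const
    apply ContinuousAt.mul continuousAt_const
    apply ContinuousAt.pow
    exact continuousAt_const.div hFcont.continuousAt hF0pos.ne'
  have hγ0 : γc 0 = if α < ν then α / ν else ν / α := by
    rw [hγc]
    simp only
    rw [hF0]
    by_cases h : α < ν
    · rw [if_pos h, abs_of_neg (by nlinarith)]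
      rw [show -(a * α - a * ν) + a * α + a * ν = 2 * a * ν by ring]
      field_simp
    · have hgt : ν < α := lt_of_le_of_ne (not_lt.mp h) (Ne.symm hαν)
      rw [if_neg h, abs_of_pos (by nlinarith)]
      rw [show a * α - a * ν + a * α + a * ν = 2 * a * α by ring]
      field_simp
  have hγ0lt : γc 0 < 1 := by
    rw [hγ0]
    split_ifs with h
    · exact (div_lt_one hν).mpr h
    · exact (div_lt_one hα).mpr (lt_of_le_of_ne (not_lt.mp h) (Ne.symm hαν))
  have hne : 1 - γc 0 ≠ 0 := by linarith
  have hG : ContinuousAt (fun lam => (I + γc lam * ζ ^ 2 + η ^ 2) / (1 - γc lam)) 0 := by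
    apply ContinuousAt.div
    · exact ((continuousAt_const.add (hγcont.mul continuousAt_const)).add continuousAt_const)
    · exact continuousAt_const.sub hγcont
    · exact hne
  have htend := (hG.tendsto.mono_left nhdsWithin_le_nhds :
    Filter.Tendsto (fun lam => (I + γc lam * ζ ^ 2 + η ^ 2) / (1 - γc lam))
      (nhdsWithin 0 (Set.Ioi 0)) (nhds ((I + γc 0 * ζ ^ 2 + η ^ 2) / (1 - γc 0))))
  have hval : (I + γc 0 * ζ ^ 2 + η ^ 2) / (1 - γc 0)
      = (if α < ν then (ν / (ν - α)) * I + (α * ζ ^ 2 + ν * η ^ 2) / (ν - α)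
        else (α / (α - ν)) * I + (ν * ζ ^ 2 + α * η ^ 2) / (α - ν)) := by
    rw [hγ0]
    split_ifs with h
    · have : ν - α > 0 := by linarith
      field_simp [ha.ne', hα.ne', hν.ne']
      ring
    · have hgt : ν < α := lt_of_le_of_ne (not_lt.mp h) (Ne.symm hαν)
      have : α - ν > 0 := by linarith
      field_simp [ha.ne', hα.ne', hν.ne']
      ring
  rw [hval] at htend
  apply tendsto_nhdsWithin_congr _ htend
  intro lam hl
  have heq : gammaFun a α ν lam = γc lam := by
    rw [gammaFun, Sfun_eq a α ν lam ha hν hα hl, hγc]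
  rw [heq]

/-- Ridgeless limit of the `ρ = 1` component of the diagonal generalization error of a
single feature-subsampling ridge predictor on equicorrelated data. -/
theorem stmt_11 (s c ω ζ η ν α : ℝ) (hs : 0 < s) (hc : c ∈ Set.Ioo (0 : ℝ) 1)
    (hω : 0 ≤ ω) (hζ : 0 ≤ ζ) (hη : 0 ≤ η) (hν : ν ∈ Set.Ioc (0 : ℝ) 1)
    (hα : 0 < α) (hαν : α ≠ ν) :
    let a := s * (1 - c) + ω ^ 2
    Filter.Tendsto
      (fun lam : ℝ =>
        ((s * (1 - c) * (1 - ν) + ω ^ 2) / ν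
            + gammaFun a α ν lam * ζ ^ 2 + η ^ 2) / (1 - gammaFun a α ν lam))
      (nhdsWithin 0 (Set.Ioi 0))
      (nhds (if α < ν then
          (ν / (ν - α)) * ((s * (1 - c) * (1 - ν) + ω ^ 2) / ν)
            + (α * ζ ^ 2 + ν * η ^ 2) / (ν - α)
        else
          (α / (α - ν)) * ((s * (1 - c) * (1 - ν) + ω ^ 2) / ν)
            + (ν * ζ ^ 2 + α * η ^ 2) / (α - ν))) := by
  intro a
  have ha : 0 < a := by
    have h1 : 0 < s * (1 - c) := mul_pos hs (by linarith [hc.2])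
    have h2 : 0 ≤ ω ^ 2 := sq_nonneg ω
    show 0 < s * (1 - c) + ω ^ 2
    linarith
  exact main_limit a α ν ((s * (1 - c) * (1 - ν) + ω ^ 2) / ν) ζ η ha hν.1 hα hαν
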